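/- If a monogenic monoid C_{k,ℓ} = ⟨a | a^k = a^ℓ⟩ with 0 ≤ ℓ < k is not aperiodic (i.e. k > ℓ+1), then C_{k,ℓ} does not embed as a subsemigroup into the monoid of n×n upper triangular tropical integer matrices for any n. -/

import Mathlib

/-- The max-plus tropical semiring `ℤ ∪ {-∞}`: tropical addition is `max`,
tropical multiplication is `+`, and `(0 : T)` is the tropical zero `-∞`. -/
abbrev T : Type := Tropical (WithTop ℤᵒᵈ)

/-- The element of the tropical semiring corresponding to the integer `k`. -/
def t (k : ℤ) : T := Tropical.trop ((OrderDual.toDual k : ℤᵒᵈ) : WithTop ℤᵒᵈ)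

/-- The defining relation of the monogenic monoid `C_{k,ℓ} = ⟨a | a^k = a^ℓ⟩`. -/
def cycRel (k l : ℕ) : FreeMonoid Unit → FreeMonoid Unit → Prop :=
  fun u v => u = FreeMonoid.of () ^ k ∧ v = FreeMonoid.of () ^ l

namespace TropAux

/-- Upper triangularity. -/
def Tri {n : ℕ} (A : Matrix (Fin n) (Fin n) T) : Prop :=
  ∀ i j : Fin n, j < i → A i j = 0

lemma tri_one {n : ℕ} : Tri (1 : Matrix (Fin n) (Fin n) T) := by
  intro i j hij
  exact Matrix.one_apply_ne (ne_of_gt hij)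

lemma tri_mul {n : ℕ} {A B : Matrix (Fin n) (Fin n) T} (hA : Tri A) (hB : Tri B) :
    Tri (A * B) := by
  intro i j hij
  rw [Matrix.mul_apply]
  apply Finset.sum_eq_zero
  intro r _
  rcases lt_or_ge r i with hr | hr
  · rw [hA i r hr, zero_mul]
  · rw [hB r j (lt_of_lt_of_le hij hr), mul_zero]

lemma tri_pow {n : ℕ} {A : Matrix (Fin n) (Fin n) T} (hA : Tri A) (m : ℕ) :
    Tri (A ^ m) := by
  induction m with
  | zero => simpa using tri_one
  | succ m ih => rw [pow_succ]; exact tri_mul ih hA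

lemma diag_mul {n : ℕ} {A B : Matrix (Fin n) (Fin n) T} (hA : Tri A) (hB : Tri B)
    (i : Fin n) : (A * B) i i = A i i * B i i := by
  rw [Matrix.mul_apply]
  apply Finset.sum_eq_single i
  · intro r _ hr
    rcases lt_or_ge r i with hlt | hle
    · rw [hA i r hlt, zero_mul]
    · rw [hB r i (lt_of_le_of_ne hle (Ne.symm hr)), mul_zero]
  · intro hi; exact absurd (Finset.mem_univ i) hi

lemma diag_pow {n : ℕ} {A : Matrix (Fin n) (Fin n) T} (hA : Tri A) (m : ℕ) (i : Fin n) :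
    (A ^ m) i i = (A i i) ^ m := by
  induction m with
  | zero => simp [Matrix.one_apply_eq]
  | succ m ih => rw [pow_succ, diag_mul (tri_pow hA m) hA, ih, pow_succ]

/-- A tropical torsion element is `0` or `1`. -/
lemma pow_eq_pow_cases {d : T} {k l : ℕ} (hk : l < k) (h : d ^ k = d ^ l) :
    d = 0 ∨ d = 1 := by
  have h' : k • Tropical.untrop d = l • Tropical.untrop d := by
    rw [← Tropical.untrop_pow, ← Tropical.untrop_pow, h]
  have key : Tropical.untrop d = ⊤ ∨ Tropical.untrop d = 0 := by
    set x := Tropical.untrop d with hx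
    clear_value x
    induction x with
    | top => left; rfl
    | coe a =>
      right
      have h1 : (k : ℤᵒᵈ) * a = (l : ℤᵒᵈ) * a := by
        have := h'
        push_cast at this
        exact_mod_cast this
      rcases mul_eq_zero.mp (show ((k : ℤᵒᵈ) - l) * a = 0 by ring_nf; linear_combination h1)
          with h2 | h2
      · exfalso
        have : (k : ℤ) - l = 0 := h2
        omega
      · rw [h2]; rfl
  rcases key with h0 | h0
  · left
    apply Tropical.untrop_injective
    rw [h0, Tropical.untrop_zero]
  · right
    apply Tropical.untrop_injective
    rw [h0, Tropical.untrop_one]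

lemma idem_cases {d : T} (h : d * d = d) : d = 0 ∨ d = 1 :=
  pow_eq_pow_cases (show 1 < 2 by norm_num) (by rw [pow_two, pow_one]; exact h)

/-- Entries of powers in the lower-right block. -/
lemma pow_succ_entry {n : ℕ} (A : Matrix (Fin (n + 1)) (Fin (n + 1)) T) (hA : Tri A)
    (m : ℕ) (i j : Fin n) :
    (A ^ m) i.succ j.succ = ((Matrix.of fun i j : Fin n => A i.succ j.succ) ^ m) i j := by
  induction m generalizing j with
  | zero => simp [Matrix.one_apply, Fin.succ_inj]
  | succ m ih =>
    rw [pow_succ, pow_succ, Matrix.mul_apply, Matrix.mul_apply, Fin.sum_univ_succ,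
      tri_pow hA m i.succ 0 (Fin.succ_pos i), zero_mul, zero_add]
    refine Finset.sum_congr rfl fun r _ => ?_
    rw [ih]
    rfl

lemma tri_sub {n : ℕ} {A : Matrix (Fin (n + 1)) (Fin (n + 1)) T} (hA : Tri A) :
    Tri (Matrix.of fun i j : Fin n => A i.succ j.succ) := by
  intro i j hij
  exact hA i.succ j.succ (by simpa using hij)

/-- Main stabilization lemma: an upper triangular tropical matrix with
idempotent diagonal has eventually constant powers. -/
lemma stab : ∀ (n : ℕ) (A : Matrix (Fin n) (Fin n) T), Tri A →
    (∀ i, A i i * A i i = A i i) → ∀ m, n ≤ m → A ^ (m + 1) = A ^ m := by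
  intro n
  induction n with
  | zero =>
    intro A _ _ m _
    ext i j
    exact i.elim0
  | succ n ih =>
    intro A hA hdiag m hm
    set B : Matrix (Fin n) (Fin n) T := Matrix.of fun i j : Fin n => A i.succ j.succ with hB
    have hBt : Tri B := tri_sub hA
    have hBd : ∀ i, B i i * B i i = B i i := fun i => hdiag i.succ
    have hBstab : ∀ m', n ≤ m' → B ^ (m' + 1) = B ^ m' := ih B hBt hBd
    -- recurrence on the top row
    have hrec : ∀ (m' : ℕ) (j : Fin n), (A ^ (m' + 1)) 0 j.succ =
        A 0 0 * (A ^ m') 0 j.succ + ∑ r : Fin n, A 0 r.succ * (B ^ m') r j := by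
      intro m' j
      rw [pow_succ', Matrix.mul_apply, Fin.sum_univ_succ]
      congr 1
      refine Finset.sum_congr rfl fun r _ => ?_
      rw [pow_succ_entry A hA]
    obtain ⟨m', rfl⟩ : ∃ m'', m = m'' + 1 := ⟨m - 1, by omega⟩
    have hm' : n ≤ m' := by omega
    ext i j
    refine Fin.cases ?_ (fun i => ?_) i
    · refine Fin.cases ?_ (fun j => ?_) j
      · -- (0,0) entry
        rw [diag_pow hA, diag_pow hA]
        have h1 : A 0 0 ^ (m' + 1 + 1) = A 0 0 ^ m' * (A 0 0 * A 0 0) := by ring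
        have h2 : A 0 0 ^ (m' + 1) = A 0 0 ^ m' * A 0 0 := by ring
        rw [h1, hdiag 0, ← h2]
      · -- (0, j+1) entry
        rw [hrec (m' + 1) j, hrec m' j, hBstab m' hm']
        set s : T := (A ^ m') 0 j.succ
        set c : T := ∑ r : Fin n, A 0 r.succ * (B ^ m') r j
        rcases idem_cases (hdiag 0) with hd | hd <;> rw [hd]
        · simp
        · simp only [one_mul]
          rw [add_assoc, Tropical.add_self]
    · refine Fin.cases ?_ (fun j => ?_) j
      · rw [tri_pow hA _ i.succ 0 (Fin.succ_pos i), tri_pow hA _ i.succ 0 (Fin.succ_pos i)]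
      · rw [pow_succ_entry A hA, pow_succ_entry A hA]
        rw [show ((Matrix.of fun i j : Fin n => A i.succ j.succ) : Matrix (Fin n) (Fin n) T)
          = B from rfl]
        have : B ^ (m' + 1 + 1) = B ^ (m' + 1) := hBstab (m' + 1) (by omega)
        rw [this, hBstab m' hm']

end TropAux

open TropAux in
/-- If the finite monogenic monoid `C_{k,ℓ} = ⟨a | a^k = a^ℓ⟩` (with `ℓ < k`) is not
aperiodic, i.e. `k > ℓ + 1`, then it does not embed as a subsemigroup into the
monoid of `n × n` upper triangular tropical matrices for any `n`. -/
theorem non_aperiodic_monogenic_not_UT_tropical (k l : ℕ) (h : l + 1 < k) :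
    ¬ ∃ (n : ℕ) (f : PresentedMonoid (cycRel k l) →ₙ* Matrix (Fin n) (Fin n) T),
        Function.Injective f ∧
          ∀ x : PresentedMonoid (cycRel k l), ∀ i j : Fin n, j < i → f x i j = 0 := by
  rintro ⟨n, f, hinj, htri⟩
  set x : PresentedMonoid (cycRel k l) := PresentedMonoid.of (cycRel k l) () with hx
  -- the defining relation
  have hrel : x ^ k = x ^ l := by
    rw [hx]
    show (PresentedMonoid.mk (cycRel k l)) (FreeMonoid.of ()) ^ k
      = (PresentedMonoid.mk (cycRel k l)) (FreeMonoid.of ()) ^ l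
    rw [← map_pow, ← map_pow]
    exact Quotient.sound (ConGen.Rel.of _ _ ⟨rfl, rfl⟩)
  set A : Matrix (Fin n) (Fin n) T := f x with hA
  -- f of positive powers
  have hfpow : ∀ m : ℕ, f (x ^ (m + 1)) = A ^ (m + 1) := by
    intro m
    induction m with
    | zero => simp [hA]
    | succ m ih =>
      rw [pow_succ, map_mul, ih, ← pow_succ]
  have hArel : A ^ (k + 1) = A ^ (l + 1) := by
    have : x ^ (k + 1) = x ^ (l + 1) := by
      rw [pow_succ, pow_succ, hrel]
    rw [← hfpow k, ← hfpow l, this]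
  have hAt : Tri A := fun i j hij => htri x i j hij
  have hAd : ∀ i, A i i * A i i = A i i := by
    intro i
    have h1 : (A i i) ^ (k + 1) = (A i i) ^ (l + 1) := by
      rw [← diag_pow hAt, ← diag_pow hAt, hArel]
    rcases pow_eq_pow_cases (by omega : l + 1 < k + 1) h1 with h2 | h2 <;>
      rw [h2] <;> simp
  -- stabilization
  have hstab : A ^ (n + 2) = A ^ (n + 1) := stab n A hAt hAd (n + 1) (by omega)
  have hxeq : x ^ (n + 2) = x ^ (n + 1) := by
    apply hinj
    rw [hfpow (n + 1), hfpow n, hstab]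
  -- contradiction via ZMod (k - l)
  set p := k - l with hp
  have hp2 : 2 ≤ p := by omega
  have hrelhom : ∀ a b : FreeMonoid Unit, cycRel k l a b →
      FreeMonoid.lift (fun _ : Unit => Multiplicative.ofAdd (1 : ZMod p)) a =
      FreeMonoid.lift (fun _ : Unit => Multiplicative.ofAdd (1 : ZMod p)) b := by
    rintro a b ⟨rfl, rfl⟩
    rw [map_pow, map_pow, FreeMonoid.lift_eval_of]
    rw [← ofAdd_nsmul, ← ofAdd_nsmul]
    congr 1
    have hk : k = l + p := by omega
    simp only [nsmul_eq_mul, mul_one]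
    rw [hk]
    push_cast
    simp [ZMod.natCast_self]
  set g : PresentedMonoid (cycRel k l) →* Multiplicative (ZMod p) :=
    PresentedMonoid.lift (fun _ : Unit => Multiplicative.ofAdd (1 : ZMod p)) hrelhom with hg
  have hgx : ∀ m : ℕ, g (x ^ m) = Multiplicative.ofAdd (m : ZMod p) := by
    intro m
    rw [map_pow]
    rw [hg, hx, PresentedMonoid.lift_of]
    rw [← ofAdd_nsmul]
    congr 1
    simp [nsmul_eq_mul]
  have : (((n : ℕ) + 2 : ℕ) : ZMod p) = (((n : ℕ) + 1 : ℕ) : ZMod p) := by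
    have := congrArg g hxeq
    rw [hgx, hgx] at this
    exact Multiplicative.ofAdd.injective this
  have h1 : ((1 : ℕ) : ZMod p) = 0 := by
    push_cast at this ⊢
    linear_combination this
  haveI : NeZero p := ⟨by omega⟩
  have hd : p ∣ 1 := (ZMod.natCast_eq_zero_iff 1 p).mp h1
  have := Nat.le_of_dvd one_pos hd
  omega
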